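/- Let f ∈ F₁(a,b) and Γ ⊂ M_b(Ω) satisfy: (a) there exists a nonempty set Ψ ⊂ Γ that is P(Ω)-determining and such that for every ψ ∈ Ψ there exist c₀ ∈ ℝ and ε₀ > 0 with c₀ + εψ ∈ Γ for all |ε| < ε₀; (b) f is strictly convex on a neighborhood of 1; and (c) f* is finite and continuously differentiable on a neighborhood of ν₀ := f'₊(1), the right derivative of f at 1. Then both D_f^Γ and W^Γ have the divergence property on probability measures on (Ω,M). -/

import Mathlib

open MeasureTheory Filter Set Topology ENNReal
open scoped Classical

noncomputable section

/-- The set of bounded measurable real-valued functions on `Ω`. -/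
def Mb (Ω : Type*) [MeasurableSpace Ω] : Set (Ω → ℝ) :=
  {g | Measurable g ∧ ∃ C : ℝ, ∀ x, |g x| ≤ C}

/-- The set of bounded continuous real-valued functions on `S`. -/
def Cb (S : Type*) [TopologicalSpace S] : Set (S → ℝ) :=
  {g | Continuous g ∧ ∃ C : ℝ, ∀ x, |g x| ≤ C}

/-- The positive part of an extended real number, as an element of `ℝ≥0∞`. -/
def posE (x : EReal) : ℝ≥0∞ := if x = ⊤ then ⊤ else ENNReal.ofReal x.toReal

/-- The extended-real-valued integral of an `EReal`-valued function, defined as the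
difference of the lower integrals of the positive and negative parts, with the
convention `∞ - ∞ = -∞`. -/
def eIntegral {Ω : Type*} [MeasurableSpace Ω] (P : Measure Ω) (h : Ω → EReal) : EReal :=
  ((∫⁻ x, posE (h x) ∂P : ℝ≥0∞) : EReal) - ((∫⁻ x, posE (-(h x)) ∂P : ℝ≥0∞) : EReal)

/-- The Legendre transform `f*(y) = sup_x {x*y - f(x)}` of `f : ℝ → (-∞,∞]`. -/
def fstar (f : ℝ → EReal) (y : ℝ) : EReal := ⨆ x : ℝ, (((x * y : ℝ) : EReal) - f x)

/-- `f : ℝ → (-∞,∞]` is (the convex LSC extension of) an element of `F₁(a,b)`: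
convex, lower semicontinuous, never `-∞`, finite exactly on the interval `(a,b)`
(with `+∞` strictly outside `[a,b]`), and `f(1) = 0` with `a < 1 < b`. -/
structure IsF1 (a b : EReal) (f : ℝ → EReal) : Prop where
  a_lt_one : a < ((1 : ℝ) : EReal)
  one_lt_b : ((1 : ℝ) : EReal) < b
  convex : ∀ x y t : ℝ, 0 < t → t < 1 →
    f (t * x + (1 - t) * y) ≤ ((t : ℝ) : EReal) * f x + (((1 - t : ℝ)) : EReal) * f y
  lsc : LowerSemicontinuous f
  ne_bot : ∀ x, f x ≠ ⊥
  finite_on : ∀ x : ℝ, a < (x : EReal) → (x : EReal) < b → f x ≠ ⊤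
  top_outside : ∀ x : ℝ, ((x : EReal) < a ∨ b < (x : EReal)) → f x = ⊤
  at_one : f 1 = 0

/-- `Λ_f^P[g] = inf_{ν ∈ ℝ} {ν + E_P[f*(g - ν)]}`. -/
def LambdaF {Ω : Type*} [MeasurableSpace Ω] (f : ℝ → EReal) (P : Measure Ω) (g : Ω → ℝ) :
    EReal :=
  ⨅ ν : ℝ, ((ν : EReal) + eIntegral P (fun x => fstar f (g x - ν)))

/-- The classical `f`-divergence `D_f(Q‖P) = E_P[f(dQ/dP)]` if `Q ≪ P`, else `∞`. -/
def fDivE {Ω : Type*} [MeasurableSpace Ω] (f : ℝ → EReal) (Q P : Measure Ω) : EReal :=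
  if Q ≪ P then eIntegral P (fun x => f ((Q.rnDeriv P x).toReal)) else ⊤

/-- The `(f,Γ)`-divergence `D_f^Γ(Q‖P) = sup_{g ∈ Γ} {E_Q[g] - Λ_f^P[g]}`. -/
def fGammaDiv {Ω : Type*} [MeasurableSpace Ω] (f : ℝ → EReal) (Γ : Set (Ω → ℝ))
    (Q P : Measure Ω) : EReal :=
  ⨆ g ∈ Γ, (((∫ x, g x ∂Q : ℝ) : EReal) - LambdaF f P g)

/-- The `Γ`-IPM `W^Γ(Q,P) = sup_{g ∈ Γ} {E_Q[g] - E_P[g]}`. -/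
def ipmW {Ω : Type*} [MeasurableSpace Ω] (Γ : Set (Ω → ℝ)) (Q P : Measure Ω) : EReal :=
  ⨆ g ∈ Γ, (((∫ x, g x ∂Q : ℝ) : EReal) - ((∫ x, g x ∂P : ℝ) : EReal))

end

/-- A set `Ψ` of functions is `P(Ω)`-determining: if two probability measures give the
same integral to every `ψ ∈ Ψ`, then they are equal. -/
def Determining {Ω : Type*} [MeasurableSpace Ω] (Ψ : Set (Ω → ℝ)) : Prop :=
  ∀ Q P : Measure Ω, IsProbabilityMeasure Q → IsProbabilityMeasure P →
    (∀ ψ ∈ Ψ, (∫ x, ψ x ∂Q) = ∫ x, ψ x ∂P) → Q = P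

lemma posE_coe (r : ℝ) : posE (r : EReal) = ENNReal.ofReal r := by
  simp [posE, EReal.coe_ne_top]

lemma posE_mono : Monotone posE := by
  intro x y h
  rcases eq_or_ne y ⊤ with hy | hy
  · simp [posE, hy]
  rcases eq_or_ne x ⊥ with hx | hx
  · simp only [posE, hx, if_neg hy]
    simp [EReal.toReal_bot]
  · have hx' : x ≠ ⊤ := fun h' => hy (top_le_iff.mp (h' ▸ h))
    simp only [posE, if_neg hx', if_neg hy]
    exact ENNReal.ofReal_le_ofReal (EReal.toReal_le_toReal h hx hy)

lemma ennreal_coe_ereal_eq (A : ℝ≥0∞) (hA : A ≠ ⊤) : (A : EReal) = ((A.toReal : ℝ) : EReal) := by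
  conv_lhs => rw [← ENNReal.ofReal_toReal hA]
  rw [EReal.coe_ennreal_ofReal, max_eq_left ENNReal.toReal_nonneg]

lemma eIntegral_mono {Ω : Type*} [MeasurableSpace Ω] {P : Measure Ω} {h₁ h₂ : Ω → EReal}
    (h : ∀ x, h₁ x ≤ h₂ x) : eIntegral P h₁ ≤ eIntegral P h₂ := by
  refine EReal.sub_le_sub ?_ ?_
  · exact EReal.coe_ennreal_le_coe_ennreal_iff.mpr (lintegral_mono fun x => posE_mono (h x))
  · exact EReal.coe_ennreal_le_coe_ennreal_iff.mpr
      (lintegral_mono fun x => posE_mono (EReal.neg_le_neg_iff.mpr (h x)))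

lemma eIntegral_coe {Ω : Type*} [MeasurableSpace Ω] {P : Measure Ω} [IsProbabilityMeasure P]
    {w : Ω → ℝ} (hw : Measurable w) {C : ℝ} (hC : ∀ x, |w x| ≤ C) :
    eIntegral P (fun x => ((w x : ℝ) : EReal)) = ((∫ x, w x ∂P : ℝ) : EReal) := by
  have hint : Integrable w P :=
    ⟨hw.aestronglyMeasurable, HasFiniteIntegral.of_bounded (C := C)
      (Filter.Eventually.of_forall fun x => by simpa using hC x)⟩
  have h1 : ∀ x, posE ((w x : ℝ) : EReal) = ENNReal.ofReal (w x) := fun x => posE_coe _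
  have h2 : ∀ x, posE (-((w x : ℝ) : EReal)) = ENNReal.ofReal (-w x) := fun x => by
    rw [← EReal.coe_neg]; exact posE_coe _
  have fin1 : (∫⁻ x, ENNReal.ofReal (w x) ∂P) ≠ ⊤ := by
    refine ne_of_lt (lt_of_le_of_lt (lintegral_mono fun x => ENNReal.ofReal_le_ofReal
      ((le_abs_self _).trans (hC x))) ?_)
    simp [lintegral_const]
  have fin2 : (∫⁻ x, ENNReal.ofReal (-w x) ∂P) ≠ ⊤ := by
    refine ne_of_lt (lt_of_le_of_lt (lintegral_mono fun x => ENNReal.ofReal_le_ofReal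
      ((neg_le_abs _).trans (hC x))) ?_)
    simp [lintegral_const]
  simp only [eIntegral, h1, h2]
  rw [ennreal_coe_ereal_eq _ fin1, ennreal_coe_ereal_eq _ fin2, ← EReal.coe_sub,
    integral_eq_lintegral_pos_part_sub_lintegral_neg_part hint]

lemma fstar_ge (f : ℝ → EReal) (hf1 : f 1 = 0) (y : ℝ) : (y : EReal) ≤ fstar f y := by
  have : (((1 * y : ℝ) : EReal) - f 1) = (y : EReal) := by rw [hf1]; simp
  calc (y : EReal) = ((1 * y : ℝ) : EReal) - f 1 := this.symm
    _ ≤ fstar f y := le_iSup (fun x : ℝ => (((x * y : ℝ) : EReal) - f x)) 1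

lemma subgrad {a b : EReal} {f : ℝ → EReal} (hf : IsF1 a b f) {ν₀ : ℝ}
    (hν₀ : Filter.Tendsto (fun x : ℝ => (f x).toReal / (x - 1)) (𝓝[>] (1 : ℝ)) (𝓝 ν₀)) :
    ∀ x : ℝ, ((ν₀ * (x - 1) : ℝ) : EReal) ≤ f x := by
  -- first: there is z₁ > 1 with f finite on (1, z₁)
  obtain ⟨z₁, hz₁, hz₁b⟩ := EReal.exists_between_coe_real hf.one_lt_b
  have hz₁1 : (1 : ℝ) < z₁ := by exact_mod_cast hz₁
  have hfin : ∀ z : ℝ, 1 < z → z < z₁ → f z ≠ ⊤ := by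
    intro z h1 h2
    refine hf.finite_on z (lt_trans hf.a_lt_one ?_) (lt_trans ?_ hz₁b)
    · exact_mod_cast h1
    · exact_mod_cast h2
  intro x
  rcases lt_trichotomy x 1 with hx | hx | hx
  · -- x < 1
    rcases eq_or_ne (f x) ⊤ with hfx | hfx
    · simp [hfx]
    have hfxr : f x = ((f x).toReal : EReal) := (EReal.coe_toReal hfx (hf.ne_bot x)).symm
    set r := (f x).toReal with hr
    -- for z ∈ (1, z₁) : q z ≥ r/(x-1)
    have key : ∀ᶠ z in 𝓝[>] (1:ℝ), r / (x - 1) ≤ (f z).toReal / (z - 1) := by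
      have hmem : Set.Ioo (1:ℝ) z₁ ∈ 𝓝[>] (1:ℝ) := Ioo_mem_nhdsGT hz₁1
      filter_upwards [hmem] with z hz
      obtain ⟨hz1, hzz₁⟩ := hz
      have hfz : f z ≠ ⊤ := hfin z hz1 hzz₁
      have hfzr : f z = ((f z).toReal : EReal) := (EReal.coe_toReal hfz (hf.ne_bot z)).symm
      set s := (f z).toReal with hs
      -- 1 = t * x + (1-t) * z with t = (z-1)/(z-x)
      have hzx : x < z := lt_trans hx hz1
      have hden : (0:ℝ) < z - x := by linarith
      set t := (z - 1) / (z - x) with ht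
      have ht0 : 0 < t := div_pos (by linarith) hden
      have ht1 : t < 1 := by
        rw [ht, div_lt_one hden]; linarith
      have hcomb : t * x + (1 - t) * z = 1 := by
        linear_combination -(div_mul_cancel₀ _ hden.ne' : t * (z - x) = z - 1)
      have := hf.convex x z t ht0 ht1
      rw [hcomb, hf.at_one, hfxr, hfzr, ← EReal.coe_mul, ← EReal.coe_mul, ← EReal.coe_add] at this
      have hreal : (0:ℝ) ≤ t * r + (1 - t) * s := by exact_mod_cast this
      -- so s ≥ -t*r/(1-t) ; then s/(z-1) ≥ r/(x-1)
      have h1t : (0:ℝ) < 1 - t := by linarith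
      have hs_ge : -(t * r) / (1 - t) ≤ s := by
        rw [div_le_iff₀ h1t]; nlinarith
      -- compute: t/(1-t) = (z-1)/(1-x)
      have h1x : (0:ℝ) < 1 - x := by linarith
      have hz1' : (0:ℝ) < z - 1 := by linarith
      have ht' : t * (z - x) = z - 1 := div_mul_cancel₀ _ hden.ne'
      have h2 : 0 ≤ (t * r + (1 - t) * s) * (z - x) := mul_nonneg hreal hden.le
      have h3 : (t * r + (1 - t) * s) * (z - x) = (z - 1) * r + (1 - x) * s := by
        have e2 : (t * r + (1 - t) * s) * (z - x) = (t * (z - x)) * r + ((z - x) - t * (z - x)) * s := by ring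
        rw [e2, ht']; ring
      have hsum : 0 ≤ (z - 1) * r + (1 - x) * s := by linarith [h3 ▸ h2]
      have e : r / (x - 1) = (-r) / (1 - x) := by
        rw [show x - 1 = -(1 - x) by ring, div_neg, neg_div]
      rw [e, div_le_div_iff₀ h1x hz1']
      nlinarith
    -- conclude by taking the limit
    have hlim : r / (x - 1) ≤ ν₀ := ge_of_tendsto hν₀ key
    -- multiply by (x - 1) < 0
    have : ν₀ * (x - 1) ≤ r := by
      have hx1 : x - 1 < 0 := by linarith
      rw [div_le_iff_of_neg hx1] at hlim
      linarith
    rw [hfxr]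
    exact_mod_cast this
  · simp [hx, hf.at_one]
  · -- x > 1
    rcases eq_or_ne (f x) ⊤ with hfx | hfx
    · simp [hfx]
    have hfxr : f x = ((f x).toReal : EReal) := (EReal.coe_toReal hfx (hf.ne_bot x)).symm
    set r := (f x).toReal with hr
    have key : ∀ᶠ z in 𝓝[>] (1:ℝ), (f z).toReal / (z - 1) ≤ r / (x - 1) := by
      have hmem : Set.Ioo (1:ℝ) x ∈ 𝓝[>] (1:ℝ) := Ioo_mem_nhdsGT hx
      filter_upwards [hmem] with z hz
      obtain ⟨hz1, hzx⟩ := hz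
      have hx1 : (0:ℝ) < x - 1 := by linarith
      set t := (z - 1) / (x - 1) with ht
      have ht0 : 0 < t := div_pos (by linarith) hx1
      have ht1 : t < 1 := by rw [ht, div_lt_one hx1]; linarith
      have hcomb : t * x + (1 - t) * 1 = z := by
        linear_combination (div_mul_cancel₀ _ hx1.ne' : t * (x - 1) = z - 1)
      have hcvx := hf.convex x 1 t ht0 ht1
      rw [hcomb, hf.at_one, mul_zero, add_zero, hfxr, ← EReal.coe_mul] at hcvx
      have hfz_ne_top : f z ≠ ⊤ := ne_top_of_le_ne_top (EReal.coe_ne_top _) hcvx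
      have hs : (f z).toReal ≤ t * r :=
        by simpa only [EReal.toReal_coe] using EReal.toReal_le_toReal hcvx (hf.ne_bot z) (EReal.coe_ne_top _)
      have hz1' : (0:ℝ) < z - 1 := by linarith
      calc (f z).toReal / (z - 1) ≤ t * r / (z - 1) := by gcongr
        _ = r / (x - 1) := by rw [ht]; field_simp
    have hlim : ν₀ ≤ r / (x - 1) := le_of_tendsto hν₀ key
    have : ν₀ * (x - 1) ≤ r := by
      have hx1 : (0:ℝ) < x - 1 := by linarith
      rw [le_div_iff₀ hx1] at hlim
      linarith
    rw [hfxr]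
    exact_mod_cast this

lemma fstar_ne_bot (f : ℝ → EReal) (hf1 : f 1 = 0) (y : ℝ) : fstar f y ≠ ⊥ :=
  fun h => (EReal.coe_ne_bot y) (le_bot_iff.mp (h ▸ fstar_ge f hf1 y))

lemma deriv_bound {f : ℝ → EReal} (hf1 : f 1 = 0) {ν₀ : ℝ}
    (h_nu : fstar f ν₀ = ((ν₀ : ℝ) : EReal)) {δ : ℝ} (hδ : 0 < δ)
    (hfin : ∀ y : ℝ, |y - ν₀| < δ → fstar f y ≠ ⊤)
    (hC1 : ContDiffOn ℝ 1 (fun y => (fstar f y).toReal) (Metric.ball ν₀ δ))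
    {η : ℝ} (hη : 0 < η) :
    ∃ δ' : ℝ, 0 < δ' ∧ δ' ≤ δ ∧ ∀ t : ℝ, |t| < δ' →
      ((fstar f (ν₀ + t)).toReal ≤ ν₀ + t + η * |t| ∧ fstar f (ν₀ + t) ≠ ⊤) := by
  set F : ℝ → ℝ := fun y => (fstar f y).toReal with hF
  have hFν₀ : F ν₀ = ν₀ := by rw [hF]; simp [h_nu]
  have hball : Metric.ball ν₀ δ ∈ 𝓝 ν₀ := Metric.isOpen_ball.mem_nhds (Metric.mem_ball_self hδ)
  have hfin' : ∀ y ∈ Metric.ball ν₀ δ, fstar f y ≠ ⊤ := fun y hy =>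
    hfin y (by rwa [Metric.mem_ball, Real.dist_eq] at hy)
  have hFge : ∀ y ∈ Metric.ball ν₀ δ, y ≤ F y := by
    intro y hy
    have := EReal.toReal_le_toReal (fstar_ge f hf1 y) (EReal.coe_ne_bot y) (hfin' y hy)
    simpa using this
  have hdF : DifferentiableAt ℝ F ν₀ :=
    ((hC1.differentiableOn one_ne_zero).differentiableAt hball)
  have hG : HasDerivAt (fun y => F y - y) (deriv F ν₀ - 1) ν₀ :=
    hdF.hasDerivAt.sub (hasDerivAt_id ν₀)
  have hmin : IsLocalMin (fun y => F y - y) ν₀ := by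
    filter_upwards [hball] with y hy
    have := hFge y hy
    simp only [hFν₀]
    linarith
  have h0 : deriv F ν₀ - 1 = 0 := by rw [← hG.deriv]; exact hmin.deriv_eq_zero
  have hF1 : HasDerivAt F 1 ν₀ := by
    have := hdF.hasDerivAt
    rwa [show deriv F ν₀ = 1 by linarith] at this
  have hlo := hasDerivAt_iff_isLittleO.mp hF1
  have hev := hlo.def hη
  rw [Metric.eventually_nhds_iff] at hev
  obtain ⟨ε, hε, h⟩ := hev
  refine ⟨min ε δ, lt_min hε hδ, min_le_right _ _, fun t ht => ?_⟩
  have htδ : |t| < δ := lt_of_lt_of_le ht (min_le_right _ _)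
  have htε : |t| < ε := lt_of_lt_of_le ht (min_le_left _ _)
  have hyb : |(ν₀ + t) - ν₀| < δ := by simpa using htδ
  refine ⟨?_, hfin _ hyb⟩
  have := h (y := ν₀ + t) (by rw [Real.dist_eq]; simpa using htε)
  simp only [hFν₀, smul_eq_mul, mul_one, Real.norm_eq_abs] at this
  have h2 : |F (ν₀ + t) - ν₀ - (ν₀ + t - ν₀)| ≤ η * |ν₀ + t - ν₀| := this
  rw [show ν₀ + t - ν₀ = t by ring] at h2
  have := abs_le.mp h2
  linarith [this.2]

lemma fstar_nu0 {a b : EReal} {f : ℝ → EReal} (hf : IsF1 a b f) {ν₀ : ℝ}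
    (hν₀ : Filter.Tendsto (fun x : ℝ => (f x).toReal / (x - 1)) (𝓝[>] (1 : ℝ)) (𝓝 ν₀)) :
    fstar f ν₀ = ((ν₀ : ℝ) : EReal) := by
  refine le_antisymm (iSup_le fun x => ?_) (fstar_ge f hf.at_one ν₀)
  calc (((x * ν₀ : ℝ) : EReal) - f x)
      ≤ ((x * ν₀ : ℝ) : EReal) - ((ν₀ * (x - 1) : ℝ) : EReal) :=
        EReal.sub_le_sub le_rfl (subgrad hf hν₀ x)
    _ = ((ν₀ : ℝ) : EReal) := by
        rw [← EReal.coe_sub]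
        norm_cast
        ring

/-- Integrability of bounded measurable functions against a finite measure. -/
lemma integrable_of_bdd {Ω : Type*} [MeasurableSpace Ω] {P : Measure Ω} [IsFiniteMeasure P]
    {ψ : Ω → ℝ} (hm : Measurable ψ) {C : ℝ} (hC : ∀ x, |ψ x| ≤ C) : Integrable ψ P :=
  ⟨hm.aestronglyMeasurable, HasFiniteIntegral.of_bounded (C := C)
    (Filter.Eventually.of_forall fun x => by simpa using hC x)⟩

lemma integral_affine {Ω : Type*} [MeasurableSpace Ω] {P : Measure Ω} [IsProbabilityMeasure P]
    {ψ : Ω → ℝ} (hint : Integrable ψ P) (c e : ℝ) :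
    ∫ x, (c + e * ψ x) ∂P = c + e * ∫ x, ψ x ∂P := by
  have hm : ∫ x, e * ψ x ∂P = e * ∫ x, ψ x ∂P := by
    simpa [smul_eq_mul] using integral_smul (μ := P) e ψ
  rw [integral_add (integrable_const c) (hint.const_mul e), integral_const, hm]
  simp

/-- Lower bound on `Λ_f^P[g]` : `Λ_f^P[g] ≥ E_P[g]`. -/
lemma lambda_ge {Ω : Type*} [MeasurableSpace Ω] {P : Measure Ω} [IsProbabilityMeasure P]
    {f : ℝ → EReal} (hf1 : f 1 = 0) {g : Ω → ℝ} (hm : Measurable g) {C : ℝ}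
    (hC : ∀ x, |g x| ≤ C) :
    ((∫ x, g x ∂P : ℝ) : EReal) ≤ LambdaF f P g := by
  refine le_iInf fun ν => ?_
  have h1 : eIntegral P (fun x => ((g x - ν : ℝ) : EReal))
      ≤ eIntegral P (fun x => fstar f (g x - ν)) :=
    eIntegral_mono fun x => fstar_ge f hf1 _
  have h2 : eIntegral P (fun x => ((g x - ν : ℝ) : EReal))
      = (((∫ x, (g x - ν) ∂P : ℝ)) : EReal) :=
    eIntegral_coe (hm.sub measurable_const) (C := C + |ν|)
      (fun x => (abs_sub _ _).trans (by gcongr; exact hC x))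
  have h3 : ∫ x, (g x - ν) ∂P = (∫ x, g x ∂P) - ν := by
    rw [integral_sub (integrable_of_bdd hm hC) (integrable_const ν), integral_const]
    simp
  calc ((∫ x, g x ∂P : ℝ) : EReal) = (ν : EReal) + (((∫ x, g x ∂P) - ν : ℝ) : EReal) := by
        rw [← EReal.coe_add]; norm_cast; ring
    _ ≤ (ν : EReal) + eIntegral P (fun x => fstar f (g x - ν)) := by
        refine add_le_add le_rfl ?_
        calc (((∫ x, g x ∂P) - ν : ℝ) : EReal)
            = (((∫ x, (g x - ν) ∂P : ℝ)) : EReal) := by rw [h3]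
          _ = eIntegral P (fun x => ((g x - ν : ℝ) : EReal)) := h2.symm
          _ ≤ eIntegral P (fun x => fstar f (g x - ν)) := h1


/-- Under assumptions (a)-(c), both `D_f^Γ` and `W^Γ` have the divergence
property on probability measures: they are nonnegative and vanish exactly on the diagonal. -/
theorem stmt9 {Ω : Type*} [MeasurableSpace Ω] (a b : EReal) (f : ℝ → EReal)
    (hf : IsF1 a b f)
    (Γ : Set (Ω → ℝ)) (hΓ : Γ ⊆ Mb Ω) (hne : Γ.Nonempty)
    -- (a) a nonempty `P(Ω)`-determining set `Ψ ⊆ Γ`, stable under small affine perturbations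
    (ha : ∃ Ψ : Set (Ω → ℝ), Ψ.Nonempty ∧ Ψ ⊆ Γ ∧ Determining Ψ ∧
      ∀ ψ ∈ Ψ, ∃ c₀ ε₀ : ℝ, 0 < ε₀ ∧
        ∀ ε : ℝ, |ε| < ε₀ → (fun x => c₀ + ε * ψ x) ∈ Γ)
    -- (b) `f` is strictly convex on a neighborhood of `1`
    (hb : ∃ δ : ℝ, 0 < δ ∧ ∀ x y t : ℝ, |x - 1| < δ → |y - 1| < δ → x ≠ y → 0 < t → t < 1 →
      f (t * x + (1 - t) * y) < ((t : ℝ) : EReal) * f x + (((1 - t : ℝ)) : EReal) * f y)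
    -- (c) `f*` is finite and `C¹` on a neighborhood of `ν₀ := f'₊(1)`
    (ν₀ : ℝ)
    (hν₀ : Filter.Tendsto (fun x : ℝ => (f x).toReal / (x - 1)) (𝓝[>] (1 : ℝ)) (𝓝 ν₀))
    (hc : ∃ δ : ℝ, 0 < δ ∧ (∀ y : ℝ, |y - ν₀| < δ → fstar f y ≠ ⊤) ∧
      ContDiffOn ℝ 1 (fun y => (fstar f y).toReal) (Metric.ball ν₀ δ)) :
    (∀ Q P : Measure Ω, IsProbabilityMeasure Q → IsProbabilityMeasure P →
      0 ≤ fGammaDiv f Γ Q P ∧ (fGammaDiv f Γ Q P = 0 ↔ Q = P))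
    ∧ (∀ Q P : Measure Ω, IsProbabilityMeasure Q → IsProbabilityMeasure P →
      0 ≤ ipmW Γ Q P ∧ (ipmW Γ Q P = 0 ↔ Q = P)) := by
  classical
  obtain ⟨Ψ, hΨne, hΨΓ, hdet, hstab⟩ := ha
  obtain ⟨δ, hδ, hfin, hC1⟩ := hc
  have h_nu : fstar f ν₀ = ((ν₀ : ℝ) : EReal) := fstar_nu0 hf hν₀
  obtain ⟨ψ₁, hψ₁⟩ := hΨne
  obtain ⟨c₁, ε₁, hε₁, hc₁Γ⟩ := hstab ψ₁ hψ₁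
  have hconst : (fun x => c₁ + 0 * ψ₁ x) ∈ Γ := hc₁Γ 0 (by simpa using hε₁)
  obtain ⟨hψ₁m, Cψ₁, hCψ₁⟩ := hΓ (hΨΓ hψ₁)
  have hint₁ : ∀ (μ : Measure Ω) [IsProbabilityMeasure μ], Integrable ψ₁ μ := by
    intro μ _; exact integrable_of_bdd hψ₁m hCψ₁
  -- integral of the constant function
  have hconst_int : ∀ (μ : Measure Ω) [IsProbabilityMeasure μ],
      ∫ x, (c₁ + 0 * ψ₁ x) ∂μ = c₁ := by
    intro μ _; rw [integral_affine (hint₁ μ) c₁ 0]; ring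
  -- Λ at the constant function equals c₁ (we only need ≤)
  have hΛconst : ∀ (P : Measure Ω) [IsProbabilityMeasure P],
      LambdaF f P (fun x => c₁ + 0 * ψ₁ x) ≤ ((c₁ : ℝ) : EReal) := by
    intro P _
    have key : (((c₁ - ν₀ : ℝ) : EReal)
        + eIntegral P (fun x => fstar f ((c₁ + 0 * ψ₁ x) - (c₁ - ν₀)))) = ((c₁ : ℝ) : EReal) := by
      have hpt : (fun x => fstar f ((c₁ + 0 * ψ₁ x) - (c₁ - ν₀)))
          = fun _ : Ω => ((ν₀ : ℝ) : EReal) := by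
        funext x
        rw [show (c₁ + 0 * ψ₁ x) - (c₁ - ν₀) = ν₀ by ring, h_nu]
      rw [hpt]
      have : eIntegral P (fun _ : Ω => ((ν₀ : ℝ) : EReal)) = ((ν₀ : ℝ) : EReal) := by
        rw [eIntegral_coe measurable_const (C := |ν₀|) (fun _ => le_refl _)]
        simp
      rw [this, ← EReal.coe_add]
      norm_cast
      ring
    calc LambdaF f P (fun x => c₁ + 0 * ψ₁ x)
        ≤ (((c₁ - ν₀ : ℝ) : EReal)
          + eIntegral P (fun x => fstar f ((c₁ + 0 * ψ₁ x) - (c₁ - ν₀)))) :=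
          iInf_le _ (c₁ - ν₀)
      _ = ((c₁ : ℝ) : EReal) := key
  -- nonnegativity of D
  have nonnegD : ∀ (Q P : Measure Ω), IsProbabilityMeasure Q → IsProbabilityMeasure P →
      0 ≤ fGammaDiv f Γ Q P := by
    intro Q P hQ hP
    refine le_trans ?_
      (le_iSup₂ (f := fun g (_ : g ∈ Γ) => (((∫ x, g x ∂Q : ℝ) : EReal) - LambdaF f P g))
        (fun x => c₁ + 0 * ψ₁ x) hconst)
    rw [hconst_int Q]
    calc (0 : EReal) = ((c₁ : ℝ) : EReal) - ((c₁ : ℝ) : EReal) := by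
          rw [← EReal.coe_sub]; norm_cast; ring
      _ ≤ ((c₁ : ℝ) : EReal) - LambdaF f P (fun x => c₁ + 0 * ψ₁ x) :=
          EReal.sub_le_sub le_rfl (hΛconst P)
  -- D(P‖P) ≤ 0
  have Dzero : ∀ (P : Measure Ω), IsProbabilityMeasure P → fGammaDiv f Γ P P ≤ 0 := by
    intro P hP
    refine iSup₂_le fun g hg => ?_
    obtain ⟨hgm, C, hC⟩ := hΓ hg
    calc (((∫ x, g x ∂P : ℝ) : EReal) - LambdaF f P g)
        ≤ ((∫ x, g x ∂P : ℝ) : EReal) - ((∫ x, g x ∂P : ℝ) : EReal) :=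
          EReal.sub_le_sub le_rfl (lambda_ge hf.at_one hgm hC)
      _ = 0 := by rw [← EReal.coe_sub]; norm_cast; ring
  -- key: D ≤ 0 forces equality of ψ-integrals
  have keyD : ∀ (Q P : Measure Ω), IsProbabilityMeasure Q → IsProbabilityMeasure P →
      fGammaDiv f Γ Q P ≤ 0 → ∀ ψ ∈ Ψ, (∫ x, ψ x ∂Q) = ∫ x, ψ x ∂P := by
    intro Q P hQ hP hsup ψ hψ
    obtain ⟨hψm, C0, hC0⟩ := hΓ (hΨΓ hψ)
    set C : ℝ := max C0 0 with hCdef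
    have hC : ∀ x, |ψ x| ≤ C := fun x => (hC0 x).trans (le_max_left _ _)
    have hC0' : (0:ℝ) ≤ C := le_max_right _ _
    have hintQ : Integrable ψ Q := integrable_of_bdd hψm hC
    have hintP : Integrable ψ P := integrable_of_bdd hψm hC
    set q : ℝ := ∫ x, ψ x ∂Q with hq
    set p : ℝ := ∫ x, ψ x ∂P with hp
    by_contra hqp
    have habs : 0 < |q - p| := abs_pos.mpr (sub_ne_zero.mpr hqp)
    have hpbd : |p| ≤ C := by
      rw [hp, ← Real.norm_eq_abs]
      calc ‖∫ x, ψ x ∂P‖ ≤ C * (P Set.univ).toReal :=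
            norm_integral_le_of_norm_le_const (Filter.Eventually.of_forall fun x => by
              simpa using hC x)
        _ = C := by simp
    set η : ℝ := |q - p| / (4 * C + 4) with hηdef
    have hη : 0 < η := div_pos habs (by linarith)
    obtain ⟨δ', hδ', hδ'δ, hbound⟩ := deriv_bound hf.at_one h_nu hδ hfin hC1 hη
    obtain ⟨c₀, ε₀, hε₀, hstΓ⟩ := hstab ψ hψ
    set s : ℝ := min (ε₀ / 2) (δ' / (2 * C + 2)) with hsdef
    have hs : 0 < s := lt_min (by linarith) (div_pos hδ' (by linarith))
    set ε : ℝ := if p < q then s else -s with hεdef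
    have hεabs : |ε| = s := by
      rw [hεdef]; split_ifs <;> simp [abs_of_pos hs]
    have hεsmall : |ε| < ε₀ := by
      rw [hεabs]; calc s ≤ ε₀ / 2 := min_le_left _ _
        _ < ε₀ := by linarith
    have hεqp : ε * (q - p) = s * |q - p| := by
      rcases lt_or_gt_of_ne hqp with h | h
      · have : ¬ p < q := not_lt.mpr h.le
        rw [hεdef, if_neg this, abs_of_neg (by linarith : q - p < 0)]; ring
      · rw [hεdef, if_pos h, abs_of_pos (by linarith : 0 < q - p)]
    have hgΓ : (fun x => c₀ + ε * ψ x) ∈ Γ := hstΓ ε hεsmall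
    -- pointwise bound on fstar
    have htbd : ∀ x, |ε * (ψ x - p)| < δ' := by
      intro x
      have h1 : |ψ x - p| ≤ 2 * C := by
        calc |ψ x - p| ≤ |ψ x| + |p| := abs_sub _ _
          _ ≤ 2 * C := by linarith [hC x]
      have h2 : s ≤ δ' / (2 * C + 2) := min_le_right _ _
      calc |ε * (ψ x - p)| = s * |ψ x - p| := by rw [abs_mul, hεabs]
        _ ≤ s * (2 * C) := by nlinarith
        _ < δ' := by
          have h3 : s * (2 * C + 2) ≤ δ' := (le_div_iff₀ (by linarith : (0:ℝ) < 2 * C + 2)).mp h2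
          nlinarith
    set K : ℝ := η * (2 * C * s) with hKdef
    set w : Ω → ℝ := fun x => (ν₀ + K - ε * p) + ε * ψ x with hwdef
    have hpt : ∀ x, fstar f ((c₀ + ε * ψ x) - (c₀ + ε * p - ν₀)) ≤ ((w x : ℝ) : EReal) := by
      intro x
      have harg : (c₀ + ε * ψ x) - (c₀ + ε * p - ν₀) = ν₀ + ε * (ψ x - p) := by ring
      rw [harg]
      obtain ⟨hle, hne⟩ := hbound (ε * (ψ x - p)) (htbd x)
      have hnb : fstar f (ν₀ + ε * (ψ x - p)) ≠ ⊥ := fstar_ne_bot f hf.at_one _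
      rw [← EReal.coe_toReal hne hnb, EReal.coe_le_coe_iff]
      have hK : η * |ε * (ψ x - p)| ≤ K := by
        rw [hKdef, abs_mul, hεabs]
        have h1 : |ψ x - p| ≤ 2 * C := by
          calc |ψ x - p| ≤ |ψ x| + |p| := abs_sub _ _
            _ ≤ 2 * C := by linarith [hC x]
        nlinarith [mul_le_mul_of_nonneg_left h1 (mul_nonneg hη.le hs.le)]
      calc (fstar f (ν₀ + ε * (ψ x - p))).toReal
          ≤ ν₀ + ε * (ψ x - p) + η * |ε * (ψ x - p)| := hle
        _ ≤ w x := by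
            simp only [hwdef]
            have hexp : ε * (ψ x - p) = ε * ψ x - ε * p := by ring
            linarith
    -- Λ upper bound
    have hΛ : LambdaF f P (fun x => c₀ + ε * ψ x) ≤ ((c₀ + ε * p + K : ℝ) : EReal) := by
      have hwm : Measurable w := measurable_const.add (hψm.const_mul ε)
      have hwb : ∀ x, |w x| ≤ |ν₀ + K - ε * p| + s * C := by
        intro x
        calc |w x| ≤ |ν₀ + K - ε * p| + |ε * ψ x| := abs_add_le _ _
          _ ≤ |ν₀ + K - ε * p| + s * C := by
            rw [abs_mul, hεabs]
            have := hC x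
            nlinarith
      have hwint : ∫ x, w x ∂P = ν₀ + K := by
        rw [hwdef]
        rw [integral_affine hintP (ν₀ + K - ε * p) ε, ← hp]
        ring
      calc LambdaF f P (fun x => c₀ + ε * ψ x)
          ≤ (((c₀ + ε * p - ν₀ : ℝ) : EReal)
            + eIntegral P (fun x => fstar f ((c₀ + ε * ψ x) - (c₀ + ε * p - ν₀)))) :=
            iInf_le _ (c₀ + ε * p - ν₀)
        _ ≤ (((c₀ + ε * p - ν₀ : ℝ) : EReal) + eIntegral P (fun x => ((w x : ℝ) : EReal))) :=
            add_le_add le_rfl (eIntegral_mono hpt)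
        _ = ((c₀ + ε * p + K : ℝ) : EReal) := by
            rw [eIntegral_coe hwm hwb, hwint, ← EReal.coe_add]
            norm_cast
            ring
    -- the term is ≤ 0 but positive: contradiction
    have hterm : (((∫ x, (c₀ + ε * ψ x) ∂Q : ℝ) : EReal)
        - LambdaF f P (fun x => c₀ + ε * ψ x)) ≤ 0 :=
      le_trans (le_iSup₂ (f := fun g (_ : g ∈ Γ) =>
        (((∫ x, g x ∂Q : ℝ) : EReal) - LambdaF f P g)) _ hgΓ) hsup
    have hQint : ∫ x, (c₀ + ε * ψ x) ∂Q = c₀ + ε * q := by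
      rw [integral_affine hintQ c₀ ε, ← hq]
    rw [hQint] at hterm
    have hchain : (((c₀ + ε * q) - (c₀ + ε * p + K) : ℝ) : EReal) ≤ 0 := by
      calc (((c₀ + ε * q) - (c₀ + ε * p + K) : ℝ) : EReal)
          = ((c₀ + ε * q : ℝ) : EReal) - ((c₀ + ε * p + K : ℝ) : EReal) := EReal.coe_sub _ _
        _ ≤ ((c₀ + ε * q : ℝ) : EReal) - LambdaF f P (fun x => c₀ + ε * ψ x) :=
            EReal.sub_le_sub le_rfl hΛ
        _ ≤ 0 := hterm
    have hreal : (c₀ + ε * q) - (c₀ + ε * p + K) ≤ 0 := by exact_mod_cast hchain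
    -- but ε(q-p) = s|q-p| > K = η (2Cs) with η = |q-p|/(4C+4)
    have hηeq : η * (4 * C + 4) = |q - p| := div_mul_cancel₀ _ (by linarith)
    have hfinal : (0:ℝ) < ε * (q - p) - K := by
      rw [hεqp, hKdef]
      nlinarith [mul_pos hs habs, mul_pos hη hs]
    linarith
  -- IPM key
  have keyW : ∀ (Q P : Measure Ω), IsProbabilityMeasure Q → IsProbabilityMeasure P →
      ipmW Γ Q P ≤ 0 → ∀ ψ ∈ Ψ, (∫ x, ψ x ∂Q) = ∫ x, ψ x ∂P := by
    intro Q P hQ hP hsup ψ hψ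
    obtain ⟨hψm, C0, hC0⟩ := hΓ (hΨΓ hψ)
    have hintQ : Integrable ψ Q := integrable_of_bdd hψm hC0
    have hintP : Integrable ψ P := integrable_of_bdd hψm hC0
    obtain ⟨c₀, ε₀, hε₀, hstΓ⟩ := hstab ψ hψ
    set q : ℝ := ∫ x, ψ x ∂Q with hq
    set p : ℝ := ∫ x, ψ x ∂P with hp
    have hterm : ∀ e : ℝ, |e| < ε₀ → e * (q - p) ≤ 0 := by
      intro e he
      have hgΓ : (fun x => c₀ + e * ψ x) ∈ Γ := hstΓ e he
      have h1 : (((∫ x, (c₀ + e * ψ x) ∂Q : ℝ) : EReal)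
          - ((∫ x, (c₀ + e * ψ x) ∂P : ℝ) : EReal)) ≤ 0 :=
        le_trans (le_iSup₂ (f := fun g (_ : g ∈ Γ) =>
          (((∫ x, g x ∂Q : ℝ) : EReal) - ((∫ x, g x ∂P : ℝ) : EReal))) _ hgΓ) hsup
      rw [integral_affine hintQ c₀ e, integral_affine hintP c₀ e, ← hq, ← hp,
        ← EReal.coe_sub] at h1
      have : (c₀ + e * q) - (c₀ + e * p) ≤ 0 := by exact_mod_cast h1
      linarith
    have h1 := hterm (ε₀ / 2) (by rw [abs_of_pos (by linarith)]; linarith)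
    have h2 := hterm (-(ε₀ / 2)) (by rw [abs_of_neg (by linarith)]; linarith)
    nlinarith
  have nonnegW : ∀ (Q P : Measure Ω), IsProbabilityMeasure Q → IsProbabilityMeasure P →
      0 ≤ ipmW Γ Q P := by
    intro Q P hQ hP
    refine le_trans ?_
      (le_iSup₂ (f := fun g (_ : g ∈ Γ) =>
        (((∫ x, g x ∂Q : ℝ) : EReal) - ((∫ x, g x ∂P : ℝ) : EReal)))
        (fun x => c₁ + 0 * ψ₁ x) hconst)
    rw [hconst_int Q, hconst_int P, ← EReal.coe_sub]
    norm_cast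
    simp
  have Wzero : ∀ (P : Measure Ω), IsProbabilityMeasure P → ipmW Γ P P ≤ 0 := by
    intro P hP
    refine iSup₂_le fun g hg => ?_
    rw [← EReal.coe_sub]
    norm_cast
    simp
  constructor
  · intro Q P hQ hP
    refine ⟨nonnegD Q P hQ hP, ?_, ?_⟩
    · intro h
      exact hdet Q P hQ hP (keyD Q P hQ hP h.le)
    · rintro rfl
      exact le_antisymm (Dzero Q hQ) (nonnegD Q Q hQ hQ)
  · intro Q P hQ hP
    refine ⟨nonnegW Q P hQ hP, ?_, ?_⟩
    · intro h
      exact hdet Q P hQ hP (keyW Q P hQ hP h.le)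
    · rintro rfl
      exact le_antisymm (Wzero Q hQ) (nonnegW Q Q hQ hQ)
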